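/- arXiv:2312.02962 — 3 statements merged into one kernel-verified Lean document; each statement's English description precedes it below -/
import Mathlib

section
/- If S is a set of 2^k pairwise-distinct subsets of a k-element character set C (i.e., S is the full power set of C), then in any rooted binary tree T whose leaves are in bijection with S, some character c ∈ C has at least 2^k/(3k) first-appearance vertices under the Fitch labeling, where the Fitch labeling assigns c to v iff all leaves below v possess c. -/
/-- If the taxa set is the full power set of a `k`-element character set, then in any
rooted binary tree whose leaves are in bijection with the taxa, some character has at
least `2^k/(3k)` first-appearance vertices under the Fitch labeling (which assigns a
character to a vertex iff all leaves below it possess the character). -/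
theorem stmt12 {V : Type*} [Fintype V] (k : ℕ) (hk : 1 ≤ k)
    (r : V) (parent : V → V) (hroot : parent r = r)
    (htree : ∀ v, ∃ n, parent^[n] v = r)
    (leaf : V → Prop) (hleaf : ∀ v, leaf v ↔ ∀ w, ¬ (w ≠ r ∧ parent w = v))
    (hbin : ∀ v, ¬ leaf v →
      ∃ x y : V, x ≠ y ∧ ∀ w, (w ≠ r ∧ parent w = v) ↔ (w = x ∨ w = y))
    (σ : V → Finset (Fin k))
    (hbij : ∀ A : Finset (Fin k), ∃! x, leaf x ∧ σ x = A) :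
    ∃ c : Fin k,
      (2 : ℝ) ^ k / (3 * k) ≤
        (Nat.card {v : V //
          (∀ x, leaf x → (∃ n, parent^[n] x = v) → c ∈ σ x) ∧
          (v = r ∨ ¬ ∀ x, leaf x → (∃ n, parent^[n] x = parent v) → c ∈ σ x)} : ℝ) := by
  classical
  have hkpos : 0 < k := hk
  set P : Fin k → V → Prop :=
    fun c v => ∀ x, leaf x → (∃ n, parent^[n] x = v) → c ∈ σ x with hPdef
  -- the root is not a leaf
  have hrnotleaf : ¬ leaf r := by
    intro hlr
    have hall : ∀ n (v : V), parent^[n] v = r → v = r := by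
      intro n
      induction n with
      | zero => intro v h; exact h
      | succ m ih =>
        intro v h
        have hpv : parent v = r := ih (parent v) (by rwa [Function.iterate_succ_apply] at h)
        by_contra hv
        exact (hleaf r).mp hlr v ⟨hv, hpv⟩
    obtain ⟨x0, ⟨hx0l, hx0⟩, _⟩ := hbij ∅
    obtain ⟨x1, ⟨hx1l, hx1⟩, _⟩ := hbij {⟨0, hk⟩}
    have e0 : x0 = r := hall (htree x0).choose x0 (htree x0).choose_spec
    have e1 : x1 = r := hall (htree x1).choose x1 (htree x1).choose_spec
    rw [e0] at hx0; rw [e1] at hx1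
    rw [hx0] at hx1
    exact absurd hx1.symm (Finset.singleton_ne_empty _)
  -- a leaf below a leaf is that leaf
  have hleafbelow : ∀ x y : V, leaf x → (∃ n, parent^[n] y = x) → y = x := by
    rintro x y hx ⟨n, hn⟩
    cases n with
    | zero => exact hn
    | succ m =>
      exfalso
      rw [Function.iterate_succ_apply'] at hn
      by_cases hw : parent^[m] y = r
      · rw [hw, hroot] at hn; exact hrnotleaf (hn ▸ hx)
      · exact (hleaf x).mp hx (parent^[m] y) ⟨hw, hn⟩
  -- no character holds at the root
  have hProot : ∀ c, ¬ P c r := by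
    intro c hc
    obtain ⟨z, ⟨hzl, hz⟩, _⟩ := hbij ∅
    have := hc z hzl (htree z)
    rw [hz] at this
    exact absurd this (Finset.notMem_empty c)
  -- key construction: for each nonempty A, a first-appearance vertex with label exactly A
  have key : ∀ A : Finset (Fin k), ∃ v : V,
      A.Nonempty → (∃ c, P c v ∧ (v = r ∨ ¬ P c (parent v))) ∧ (∀ c, P c v ↔ c ∈ A) := by
    intro A
    by_cases hA : A.Nonempty
    · obtain ⟨x, ⟨hxl, hσx⟩, _⟩ := hbij A
      have hQ : ∃ n, ∃ c ∈ A, ¬ P c (parent^[n] x) := by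
        obtain ⟨c, hc⟩ := hA
        obtain ⟨n, hn⟩ := htree x
        exact ⟨n, c, hc, by rw [hn]; exact hProot c⟩
      set N := Nat.find hQ with hNdef
      have hN0 : ¬ ∃ c ∈ A, ¬ P c (parent^[0] x) := by
        push_neg
        intro c hc
        intro y hy hyb
        have := hleafbelow _ y hxl hyb
        rw [this, hσx]; exact hc
      have hNpos : 0 < N := by
        rcases Nat.eq_zero_or_pos N with h0 | h; · exact absurd (h0 ▸ Nat.find_spec hQ) hN0
        · exact h
      refine ⟨parent^[N - 1] x, fun _ => ⟨?_, ?_⟩⟩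
      · obtain ⟨c, hcA, hcn⟩ := Nat.find_spec hQ
        refine ⟨c, ?_, Or.inr ?_⟩
        · have hmin : ¬ ∃ c ∈ A, ¬ P c (parent^[N - 1] x) :=
            Nat.find_min hQ (Nat.sub_lt hNpos one_pos)
          push_neg at hmin
          exact hmin c hcA
        · have heq := Function.iterate_succ_apply' parent (N - 1) x
          rw [Nat.succ_eq_add_one, Nat.sub_add_cancel hNpos] at heq
          rw [← heq]; exact hcn
      · intro c
        constructor
        · intro hPc
          have : c ∈ σ x := hPc x hxl ⟨N - 1, rfl⟩
          rwa [hσx] at this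
        · intro hcA
          have hmin : ¬ ∃ c ∈ A, ¬ P c (parent^[N - 1] x) :=
            Nat.find_min hQ (Nat.sub_lt hNpos one_pos)
          push_neg at hmin
          exact hmin c hcA
    · exact ⟨r, fun h => absurd h hA⟩
  choose f hf using key
  -- injectivity of f on nonempty sets
  have hinj : ∀ A B : Finset (Fin k), A.Nonempty → B.Nonempty → f A = f B → A = B := by
    intro A B hA hB hfe
    ext c
    rw [← (hf A hA).2 c, hfe, (hf B hB).2 c]
  -- the injection into the sigma type of first-appearance vertices
  set Cond : Fin k → V → Prop := fun c v => P c v ∧ (v = r ∨ ¬ P c (parent v)) with hConddef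
  have hcount : (2 ^ k - 1 : ℕ) ≤ ∑ c : Fin k, Nat.card {v : V // Cond c v} := by
    have hcard2 : Nat.card {A : Finset (Fin k) // A.Nonempty} = 2 ^ k - 1 := by
      rw [Nat.card_eq_fintype_card, Fintype.card_subtype]
      have : (Finset.univ.filter fun A : Finset (Fin k) => A.Nonempty)
          = Finset.univ \ {(∅ : Finset (Fin k))} := by
        ext A
        simp [Finset.nonempty_iff_ne_empty]
      rw [this, Finset.card_sdiff_of_subset (by simp), Finset.card_singleton, Finset.card_univ,
        Fintype.card_finset, Fintype.card_fin]
    have hsig : Nat.card (Σ c : Fin k, {v : V // Cond c v})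
        = ∑ c : Fin k, Nat.card {v : V // Cond c v} := by
      simp [Nat.card_eq_fintype_card, Fintype.card_sigma]
    rw [← hsig, ← hcard2]
    set g : {A : Finset (Fin k) // A.Nonempty} → Σ c : Fin k, {v : V // Cond c v} :=
      fun p => ⟨((hf p.1 p.2).1).choose, f p.1, ((hf p.1 p.2).1).choose_spec⟩ with hg
    have hginj : Function.Injective g := by
      intro p q hpq
      have : (g p).2.1 = (g q).2.1 := by rw [hpq]
      have hfe : f p.1 = f q.1 := this
      exact Subtype.ext (hinj p.1 q.1 p.2 q.2 hfe)
    exact Nat.card_le_card_of_injective g hginj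
  -- pigeonhole over characters, in ℝ
  haveI : Nonempty (Fin k) := ⟨⟨0, hk⟩⟩
  have hpow : (1 : ℕ) ≤ 2 ^ k := Nat.one_le_two_pow
  obtain ⟨c, -, hc⟩ : ∃ c ∈ Finset.univ, ((2 : ℝ) ^ k - 1) / k
      ≤ (Nat.card {v : V // Cond c v} : ℝ) := by
    apply Finset.exists_le_of_sum_le (Finset.univ_nonempty (α := Fin k))
    rw [Finset.sum_const, Finset.card_univ, Fintype.card_fin, nsmul_eq_mul,
      mul_div_cancel₀ _ (by positivity : (k : ℝ) ≠ 0)]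
    calc ((2 : ℝ) ^ k - 1) = ((2 ^ k - 1 : ℕ) : ℝ) := by push_cast [hpow]; ring
    _ ≤ ((∑ c : Fin k, Nat.card {v : V // Cond c v} : ℕ) : ℝ) := by exact_mod_cast hcount
    _ = ∑ c : Fin k, (Nat.card {v : V // Cond c v} : ℝ) := by push_cast; rfl
  refine ⟨c, le_trans ?_ hc⟩
  have h2k : (2 : ℝ) ≤ 2 ^ k := by
    calc (2 : ℝ) = 2 ^ 1 := (pow_one 2).symm
    _ ≤ 2 ^ k := pow_le_pow_right₀ one_le_two hk
  rw [div_le_div_iff₀ (by positivity) (by positivity)]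
  nlinarith [h2k]
end

section
/- Let T be a rooted binary tree with leaves labeled by pairwise distinct subsets of C, with Fitch labeling λ. Suppose x and y are non-cherry leaves, neither of which is a first-appearance vertex of any character, such that the parent p_y of y is a strict descendant of the parent p_x of x and no other 'marked' parent lies strictly between them. Then x ⊆ y (as character sets), x ≠ y, and for any character c ∈ y \ x there exists a first-appearance vertex z for c with p_y ≼ z ≺ p_x (z is an ancestor of p_y and a strict descendant of p_x). -/
private lemma switch {P : ℕ → Prop} (h0 : P 0) :
    ∀ n, ¬ P n → ∃ k, k < n ∧ P k ∧ ¬ P (k+1) := by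
  intro n
  induction n with
  | zero => intro h; exact absurd h0 h
  | succ m ih =>
    intro h
    by_cases hm : P m
    · exact ⟨m, Nat.lt_succ_self m, hm, h⟩
    · obtain ⟨k, hk, h1, h2⟩ := ih hm
      exact ⟨k, hk.trans (Nat.lt_succ_self m), h1, h2⟩
/-- Marked-nodes lemma for the transfer lower bound. Let `T` be a rooted tree with
leaves labeled by pairwise distinct character sets and Fitch labeling `lam`, and
first-appearance predicate `FA`. If `x, y` are non-cherry leaves, neither of which is
a first-appearance of any character, `parent y` is a strict descendant of `parent x`,
and no other marked node lies strictly between them, then `σ x ⊆ σ y`, `σ x ≠ σ y`,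
and for every character `c ∈ σ y \ σ x` there is a first-appearance vertex `z` for `c`
with `parent y ≼ z ≺ parent x`. -/
theorem stmt14 {V C : Type*} [Fintype V] (r : V) (parent : V → V)
    (hroot : parent r = r) (htree : ∀ v, ∃ n, parent^[n] v = r)
    (leaf : V → Prop) (hleaf : ∀ v, leaf v ↔ ∀ w, ¬ (w ≠ r ∧ parent w = v))
    (σ : V → Set C)
    (hdist : ∀ a b, leaf a → leaf b → a ≠ b → σ a ≠ σ b)
    (lam : V → Set C)
    (hlam : ∀ v c, c ∈ lam v ↔ ∀ z, leaf z → (∃ n, parent^[n] z = v) → c ∈ σ z)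
    (FA : C → V → Prop)
    (hFA : ∀ c v, FA c v ↔ (c ∈ lam v ∧ (v = r ∨ c ∉ lam (parent v))))
    (x y : V) (hx : leaf x) (hy : leaf y)
    (hxnc : ∀ z, leaf z → z ≠ x → parent z ≠ parent x)
    (hync : ∀ z, leaf z → z ≠ y → parent z ≠ parent y)
    (hxFA : ∀ c, ¬ FA c x) (hyFA : ∀ c, ¬ FA c y)
    (hdesc : (∃ n, parent^[n] (parent y) = parent x) ∧ parent y ≠ parent x)
    (hbetween : ∀ m,
      (∃ z, leaf z ∧ (∀ w, leaf w → w ≠ z → parent w ≠ parent z) ∧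
        (∀ c, ¬ FA c z) ∧ parent z = m) →
      (∃ n, parent^[n] m = parent x) → (∃ n, parent^[n] (parent y) = m) →
      m = parent x ∨ m = parent y) :
    σ x ⊆ σ y ∧ σ x ≠ σ y ∧
      ∀ c ∈ σ y, c ∉ σ x →
        ∃ z, FA c z ∧ (∃ n, parent^[n] (parent y) = z) ∧
          (∃ n, parent^[n] z = parent x) ∧ z ≠ parent x := by
  classical
  -- if a leaf equals r, everything is r
  have triv : ∀ v, leaf v → v = r → ∀ u, u = r := by
    intro v hv hvr u
    obtain ⟨n, hn⟩ := htree u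
    clear hxnc hync hdesc hbetween
    induction n generalizing u with
    | zero => exact hn
    | succ m ih =>
      rw [Function.iterate_succ_apply] at hn
      have hp : parent u = r := ih (parent u) hn
      by_contra hur
      exact ((hleaf v).mp hv u) ⟨hur, hvr ▸ hp⟩
  have hxr : x ≠ r := by
    intro hxr
    exact hdesc.2 (by rw [triv x hx hxr y, triv x hx hxr x])
  have hyr : y ≠ r := by
    intro hyr
    exact hdesc.2 (by rw [triv y hy hyr y, triv y hy hyr x])
  -- descendants of a non-root leaf are itself
  have desc_leaf : ∀ v, leaf v → v ≠ r → ∀ n z, parent^[n] z = v → z = v := by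
    intro v hv hvr n
    induction n with
    | zero => intro z h; exact h
    | succ m ih =>
      intro z h
      rw [Function.iterate_succ_apply'] at h
      set w := parent^[m] z with hw
      by_cases hwr : w = r
      · exact absurd (by rw [hwr, hroot] at h; exact h.symm) hvr
      · exact absurd ⟨hwr, h⟩ ((hleaf v).mp hv w)
  have lam_leaf : ∀ v, leaf v → v ≠ r → lam v = σ v := by
    intro v hv hvr
    ext c
    rw [hlam]
    constructor
    · intro h; exact h v hv ⟨0, rfl⟩
    · rintro h z hz ⟨n, hn⟩
      rw [desc_leaf v hv hvr n z hn] at hz ⊢; exact h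
  -- x not FA: σ x ⊆ lam (parent x)
  have hxup : ∀ c, c ∈ σ x → c ∈ lam (parent x) := by
    intro c hc
    have := hxFA c
    rw [hFA] at this
    push_neg at this
    exact (this ((lam_leaf x hx hxr).symm ▸ hc)).2
  have hyup : ∀ c, c ∈ σ y → c ∈ lam (parent y) := by
    intro c hc
    have := hyFA c
    rw [hFA] at this
    push_neg at this
    exact (this ((lam_leaf y hy hyr).symm ▸ hc)).2
  obtain ⟨n, hn⟩ := hdesc.1
  have hxy : x ≠ y := fun h => hdesc.2 (h ▸ rfl)
  have hsub : σ x ⊆ σ y := by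
    intro c hc
    exact (hlam (parent x) c).mp (hxup c hc) y hy ⟨n + 1, by
      rw [Function.iterate_succ_apply]; exact hn⟩
  refine ⟨hsub, hdist x y hx hy hxy, ?_⟩
  intro c hcy hcx
  have hcpx : c ∉ lam (parent x) := by
    intro h
    exact hcx ((hlam (parent x) c).mp h x hx ⟨1, rfl⟩)
  have h0 : c ∈ lam (parent^[0] (parent y)) := hyup c hcy
  have hnn : ¬ c ∈ lam (parent^[n] (parent y)) := by rw [hn]; exact hcpx
  obtain ⟨k, hk, h1, h2⟩ := switch (P := fun k => c ∈ lam (parent^[k] (parent y))) h0 n hnn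
  refine ⟨parent^[k] (parent y), ?_, ⟨k, rfl⟩, ⟨n - k, ?_⟩, ?_⟩
  · rw [hFA]
    refine ⟨h1, Or.inr ?_⟩
    rwa [Function.iterate_succ_apply'] at h2
  · rw [← Function.iterate_add_apply, Nat.sub_add_cancel hk.le, hn]
  · intro h
    exact hcpx (h ▸ h1)
end

section
/- Let T be a finite rooted tree with root r and let l be a labeling of the vertices by subsets of C such that (a) for every character c, the set V_c of vertices possessing c is nonempty and connected in T with a unique vertex of in-degree 0 in T[V_c], and (b) for every c, either V_c = V(T) or the complement of V_c is connected in T and contains r. Then l is a no-loss labeling: for every edge (u,v) of T, l(u) ⊆ l(v). -/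
/-- Tree case of the equivalence theorem: in a finite rooted tree, if for every
character `c` (a) the presence set `V_c` is nonempty, connected in `T`, and has a
unique vertex of in-degree 0 in `T[V_c]`, and (b) either `V_c` is all of `V(T)` or its
complement is connected in `T` and contains the root, then the labeling is no-loss:
`l(u) ⊆ l(v)` along every edge `(u, v)`. -/
theorem stmt19 {V C : Type*} [Fintype V] (r : V) (parent : V → V)
    (hroot : parent r = r) (htree : ∀ v, ∃ n, parent^[n] v = r)
    (l : V → Set C)
    (ha : ∀ c : C,
      (∃ v, c ∈ l v) ∧
      (∀ a b : V, c ∈ l a → c ∈ l b →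
        Relation.ReflTransGen
          (fun x y => c ∈ l x ∧ c ∈ l y ∧
            ((y ≠ r ∧ parent y = x) ∨ (x ≠ r ∧ parent x = y))) a b) ∧
      (∃! v, c ∈ l v ∧ (v = r ∨ c ∉ l (parent v))))
    (hb : ∀ c : C,
      (∀ v, c ∈ l v) ∨
      (c ∉ l r ∧
        ∀ a b : V, c ∉ l a → c ∉ l b →
          Relation.ReflTransGen
            (fun x y => c ∉ l x ∧ c ∉ l y ∧
              ((y ≠ r ∧ parent y = x) ∨ (x ≠ r ∧ parent x = y))) a b)) :
    ∀ v, v ≠ r → l (parent v) ⊆ l v := by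
  intro v hv c hc
  by_contra hcv
  rcases hb c with hall | ⟨hr, hconn⟩
  · exact hcv (hall v)
  · have walk := hconn v r hcv hr
    have key : ∀ b, Relation.ReflTransGen
        (fun x y => c ∉ l x ∧ c ∉ l y ∧
          ((y ≠ r ∧ parent y = x) ∨ (x ≠ r ∧ parent x = y))) v b →
        ∃ n, parent^[n] b = v := by
      intro b hwalk
      induction hwalk with
      | refl => exact ⟨0, rfl⟩
      | tail h step ih =>
        obtain ⟨n, hn⟩ := ih
        rcases step with ⟨hx, hy, hcase | hcase⟩
        ·
          exact ⟨n + 1, by rw [Function.iterate_succ_apply, hcase.2, hn]⟩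
        · -- parent x = y
          rcases n with _ | m
          · simp at hn
            subst hn
            exact absurd (hcase.2 ▸ hc) hy
          · exact ⟨m, by rw [← hcase.2, ← Function.iterate_succ_apply, hn]⟩
    obtain ⟨n, hn⟩ := key r walk
    rw [Function.iterate_fixed hroot] at hn
    exact hv hn.symm
end
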